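/- In the setting of the previous construction (G' obtained from G by adding k·n² universal vertices V_a, capacity U = n² + n): if there are k closed balls in the shortest-path metric of G', of total radius k, together with an assignment of all vertices of V ∪ V_a to balls containing them such that each ball receives at most U vertices, then every ball has radius exactly 1, each ball's center lies in V, and the set of the k centers is a dominating set of G of size k. -/

import Mathlib

/-- The join of a graph `G` with a set `A` of new universal vertices. -/
def joinGraph {V : Type*} (A : Type*) (G : SimpleGraph V) : SimpleGraph (V ⊕ A) where
  Adj x y :=
    match x, y with
    | Sum.inl u, Sum.inl v => G.Adj u v
    | Sum.inl _, Sum.inr _ => True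
    | Sum.inr _, Sum.inl _ => True
    | Sum.inr _, Sum.inr _ => False
  symm := by
    constructor
    rintro (u | a) (v | b) h
    · exact h.symm
    · trivial
    · trivial
    · exact h.elim
  loopless := by
    constructor
    rintro (u | a) h
    · exact G.irrefl h
    · exact h.elim

/-- A solution of cost `k` to the capacitated sum-of-radii instance built from `G` (with
`k·n²` universal vertices and capacity `U = n² + n`) yields: every ball has radius exactly 1,
every center lies in `V`, and the centers form a dominating set of `G` of size `k`. -/
theorem stmt6 {V : Type*} [Fintype V] [DecidableEq V] (G : SimpleGraph V)
    (n k : ℕ) (hn : Fintype.card V = n) (hk : 2 ≤ k) (hkn : k ≤ n)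
    (x : Fin k → V ⊕ Fin (k * n ^ 2)) (hinj : Function.Injective x)
    (ρ : Fin k → ℕ) (hsum : ∑ i, ρ i = k)
    (μ : (V ⊕ Fin (k * n ^ 2)) → Fin k)
    (hμ : ∀ v, (joinGraph (Fin (k * n ^ 2)) G).dist (x (μ v)) v ≤ ρ (μ v))
    (hcap : ∀ i, (Finset.univ.filter (fun v : V ⊕ Fin (k * n ^ 2) => μ v = i)).card ≤ n ^ 2 + n) :
    (∀ i, ρ i = 1) ∧
    ∃ c : Fin k → V, (∀ i, x i = Sum.inl (c i)) ∧ Function.Injective c ∧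
      ∀ v : V, ∃ i, c i = v ∨ G.Adj (c i) v := by
  have hn2 : 2 ≤ n := hk.trans hkn
  have hm0 : 0 < k * n ^ 2 := Nat.mul_pos (by omega) (by positivity)
  obtain ⟨u0⟩ : Nonempty V := by
    rw [← Fintype.card_pos_iff]; omega
  set H := joinGraph (Fin (k * n ^ 2)) G with hH
  have hadj : ∀ (u : V) (a : Fin (k * n ^ 2)), H.Adj (Sum.inl u) (Sum.inr a) := fun u a => trivial
  have hreach : ∀ a b : V ⊕ Fin (k * n ^ 2), H.Reachable a b := by
    rintro (u | a) (v | b)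
    · exact ((hadj u ⟨0, hm0⟩).reachable).trans ((hadj v ⟨0, hm0⟩).reachable).symm
    · exact (hadj u b).reachable
    · exact ((hadj v a).reachable).symm
    · exact ((hadj u0 a).reachable).symm.trans (hadj u0 b).reachable
  have hdist0 : ∀ a b : V ⊕ Fin (k * n ^ 2), H.dist a b = 0 → a = b := by
    intro a b h
    exact ((hreach a b).dist_eq_zero_iff).mp h
  have hdist1 : ∀ a b : V ⊕ Fin (k * n ^ 2), H.dist a b ≤ 1 → a = b ∨ H.Adj a b := by
    intro a b h
    interval_cases hd : H.dist a b
    · exact Or.inl (hdist0 a b hd)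
    · exact Or.inr (SimpleGraph.dist_eq_one_iff_adj.mp hd)
  have htot : ∑ i : Fin k, (Finset.univ.filter (fun v : V ⊕ Fin (k * n ^ 2) => μ v = i)).card
      = n + k * n ^ 2 := by
    rw [← Finset.card_eq_sum_card_fiberwise (fun v _ => Finset.mem_univ (μ v))]
    simp [Fintype.card_sum, hn]
  have hsplit : ∀ (j : Fin k) (c : ℕ),
      (Finset.univ.filter (fun v : V ⊕ Fin (k * n ^ 2) => μ v = j)).card ≤ c →
      n + k * n ^ 2 ≤ c + (k - 1) * (n ^ 2 + n) := by
    intro j c hc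
    rw [← htot, ← Finset.sum_erase_add _ _ (Finset.mem_univ j)]
    have h1 : ∑ i ∈ Finset.univ.erase j,
        (Finset.univ.filter (fun v : V ⊕ Fin (k * n ^ 2) => μ v = i)).card
        ≤ (k - 1) * (n ^ 2 + n) := by
      calc ∑ i ∈ Finset.univ.erase j,
          (Finset.univ.filter (fun v : V ⊕ Fin (k * n ^ 2) => μ v = i)).card
          ≤ ∑ _i ∈ Finset.univ.erase j, (n ^ 2 + n) := Finset.sum_le_sum fun i _ => hcap i
        _ = (k - 1) * (n ^ 2 + n) := by
            rw [Finset.sum_const, Finset.card_erase_of_mem (Finset.mem_univ j)]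
            simp [mul_comm]
    omega
  have hpos : ∀ i, 1 ≤ ρ i := by
    intro j
    by_contra h
    have hj0 : ρ j = 0 := by omega
    have hfib : (Finset.univ.filter (fun v : V ⊕ Fin (k * n ^ 2) => μ v = j)).card ≤ 1 := by
      refine le_trans (Finset.card_le_card ?_) (Finset.card_singleton (x j)).le
      intro v hv
      rw [Finset.mem_filter] at hv
      have h2 := hμ v
      rw [hv.2, hj0, Nat.le_zero] at h2
      simp [hdist0 _ _ h2]
    have hle := hsplit j 1 hfib
    obtain ⟨k', rfl⟩ := Nat.exists_eq_add_of_le hk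
    have hkn' : 2 + k' ≤ n := hkn
    have h2 : (2 + k' - 1) = 1 + k' := by omega
    rw [h2] at hle
    nlinarith [Nat.mul_le_mul_right n hkn']
  have hone : ∀ i, ρ i = 1 := by
    intro i
    by_contra hne
    have h2 : 2 ≤ ρ i := by have := hpos i; omega
    have h3 : (k - 1) * 1 + 2 ≤ ∑ j, ρ j := by
      rw [← Finset.sum_erase_add _ _ (Finset.mem_univ i)]
      have h4 : (k - 1) * 1 ≤ ∑ j ∈ Finset.univ.erase i, ρ j := by
        calc (k-1) * 1 = ∑ _j ∈ Finset.univ.erase i, 1 := by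
              rw [Finset.sum_const, Finset.card_erase_of_mem (Finset.mem_univ i)]
              simp [mul_comm]
          _ ≤ _ := Finset.sum_le_sum fun j _ => hpos j
      omega
    rw [hsum] at h3
    omega
  refine ⟨hone, ?_⟩
  have hcenter : ∀ i, ∃ u : V, x i = Sum.inl u := by
    intro j
    cases hxj : x j with
    | inl u => exact ⟨u, rfl⟩
    | inr a =>
      exfalso
      have hfib : (Finset.univ.filter (fun v : V ⊕ Fin (k * n ^ 2) => μ v = j)).card ≤ n + 1 := by
        have hsub : (Finset.univ.filter (fun v : V ⊕ Fin (k * n ^ 2) => μ v = j)) ⊆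
            insert (Sum.inr a) (Finset.univ.image (Sum.inl : V → V ⊕ Fin (k * n ^ 2))) := by
          intro v hv
          rw [Finset.mem_filter] at hv
          have hd := hμ v
          rw [hv.2, hone j, hxj] at hd
          rcases hdist1 _ _ hd with h | h
          · simp [← h]
          · cases v with
            | inl u => simp
            | inr b => exact h.elim
        calc (Finset.univ.filter (fun v : V ⊕ Fin (k * n ^ 2) => μ v = j)).card
            ≤ _ := Finset.card_le_card hsub
          _ ≤ (Finset.univ.image (Sum.inl : V → V ⊕ Fin (k * n ^ 2))).card + 1 :=
              Finset.card_insert_le _ _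
          _ ≤ n + 1 := by
              have h5 : (Finset.univ.image (Sum.inl : V → V ⊕ Fin (k * n ^ 2))).card ≤ n := by
                refine le_trans (Finset.card_image_le) ?_
                simp [hn]
              omega
      have hle := hsplit j (n + 1) hfib
      obtain ⟨k', rfl⟩ := Nat.exists_eq_add_of_le hk
      have hkn' : 2 + k' ≤ n := hkn
      have h2 : (2 + k' - 1) = 1 + k' := by omega
      rw [h2] at hle
      nlinarith [Nat.mul_le_mul_right n hkn']
  choose c hc using hcenter
  refine ⟨c, hc, ?_, ?_⟩
  · intro i j hij
    apply hinj
    rw [hc i, hc j, hij]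
  · intro v
    refine ⟨μ (Sum.inl v), ?_⟩
    have hd := hμ (Sum.inl v)
    rw [hone, hc] at hd
    rcases hdist1 _ _ hd with h | h
    · exact Or.inl (Sum.inl.inj h)
    · exact Or.inr h
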